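/- Let f : ℝ^p → ℝ be convex and differentiable, and let H be a (fixed) symmetric positive definite p×p matrix such that the quadratic surrogate majorization f(α) ≤ f(β) + ∇f(β)ᵀ(α − β) + (1/2)(α − β)ᵀ H (α − β) holds for all α, β ∈ ℝ^p. Assume the set of stationary points {β : ∇f(β) = 0} is nonempty. Then for any starting point β₀, the MM iterates β_{m+1} = β_m − H⁻¹ ∇f(β_m) converge to a point β* with ∇f(β*) = 0, which (by convexity) is a global minimum point of f. -/

import Mathlib

open Matrix Filter

noncomputable def mmQuad {p : ℕ} (M : Matrix (Fin p) (Fin p) ℝ)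
    (v : EuclideanSpace ℝ (Fin p)) : ℝ :=
  (WithLp.equiv 2 (Fin p → ℝ)) v ⬝ᵥ M.mulVec ((WithLp.equiv 2 (Fin p → ℝ)) v)

lemma mm_equiv_sub {p : ℕ} (a b : EuclideanSpace ℝ (Fin p)) :
    (WithLp.equiv 2 (Fin p → ℝ)) (a - b) =
      (WithLp.equiv 2 (Fin p → ℝ)) a - (WithLp.equiv 2 (Fin p → ℝ)) b := rfl

lemma mm_equiv_smul {p : ℕ} (c : ℝ) (a : EuclideanSpace ℝ (Fin p)) :
    (WithLp.equiv 2 (Fin p → ℝ)) (c • a) = c • (WithLp.equiv 2 (Fin p → ℝ)) a := rfl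

lemma mmInner_eq_dot {p : ℕ} (x y : EuclideanSpace ℝ (Fin p)) :
    (inner ℝ x y : ℝ) = (WithLp.equiv 2 (Fin p → ℝ)) x ⬝ᵥ (WithLp.equiv 2 (Fin p → ℝ)) y := by
  simp [PiLp.inner_apply, dotProduct, RCLike.inner_apply, mul_comm]

lemma mmQuad_cont {p : ℕ} (M : Matrix (Fin p) (Fin p) ℝ) :
    Continuous fun v : EuclideanSpace ℝ (Fin p) => mmQuad M v := by
  have h : ∀ i, Continuous fun v : EuclideanSpace ℝ (Fin p) => (WithLp.equiv 2 (Fin p → ℝ)) v i :=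
    fun i => (continuous_apply i).comp (PiLp.continuous_ofLp ..)
  unfold mmQuad dotProduct Matrix.mulVec
  exact continuous_finset_sum _ fun i _ =>
    (h i).mul (continuous_finset_sum _ fun j _ => continuous_const.mul (h j))

lemma mmQuad_zero {p : ℕ} (M : Matrix (Fin p) (Fin p) ℝ) : mmQuad M 0 = 0 := by
  simp [mmQuad]

lemma mmQuad_neg {p : ℕ} (M : Matrix (Fin p) (Fin p) ℝ) (v : EuclideanSpace ℝ (Fin p)) :
    mmQuad M (-v) = mmQuad M v := by
  simp [mmQuad, Matrix.mulVec_neg]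

lemma mmQuad_nonneg {p : ℕ} {M : Matrix (Fin p) (Fin p) ℝ} (hM : M.PosDef)
    (v : EuclideanSpace ℝ (Fin p)) : 0 ≤ mmQuad M v := by
  simpa [mmQuad] using hM.posSemidef.re_dotProduct_nonneg ((WithLp.equiv 2 (Fin p → ℝ)) v)

lemma mmQuad_lb {p : ℕ} {M : Matrix (Fin p) (Fin p) ℝ} (hM : M.PosDef) :
    ∃ c > 0, ∀ v : EuclideanSpace ℝ (Fin p), c * ‖v‖ ^ 2 ≤ mmQuad M v := by
  have hq0 : ∀ v : EuclideanSpace ℝ (Fin p), v ≠ 0 → 0 < mmQuad M v := by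
    intro v hv
    have hev : (WithLp.equiv 2 (Fin p → ℝ)) v ≠ 0 := by
      simpa using (WithLp.equiv 2 (Fin p → ℝ)).injective.ne hv
    simpa [mmQuad] using hM.re_dotProduct_pos hev
  rcases Nat.eq_zero_or_pos p with hp | hp
  · subst hp
    refine ⟨1, one_pos, fun v => ?_⟩
    haveI : Subsingleton (EuclideanSpace ℝ (Fin 0)) :=
      ⟨fun a b => by ext i; exact i.elim0⟩
    have hv : v = 0 := Subsingleton.elim v 0
    subst hv
    simp [mmQuad_zero]
  · haveI : Nonempty (Fin p) := ⟨⟨0, hp⟩⟩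
    haveI : Nontrivial (EuclideanSpace ℝ (Fin p)) :=
      inferInstance
    obtain ⟨x₀, hx₀mem, hmin⟩ := (isCompact_sphere (0 : EuclideanSpace ℝ (Fin p)) 1).exists_isMinOn
      (NormedSpace.sphere_nonempty.mpr zero_le_one) (mmQuad_cont M).continuousOn
    have hx₀norm : ‖x₀‖ = 1 := by simpa using mem_sphere_zero_iff_norm.mp hx₀mem
    have hx₀ne : x₀ ≠ 0 := by intro h; rw [h] at hx₀norm; simp at hx₀norm
    refine ⟨_, hq0 x₀ hx₀ne, fun v => ?_⟩
    rcases eq_or_ne v 0 with rfl | hv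
    · simp [mmQuad_zero]
    · have hn : ‖v‖ ≠ 0 := norm_ne_zero_iff.mpr hv
      set u : EuclideanSpace ℝ (Fin p) := ‖v‖⁻¹ • v with hu
      have hunorm : ‖u‖ = 1 := norm_smul_inv_norm hv
      have humem : u ∈ Metric.sphere (0 : EuclideanSpace ℝ (Fin p)) 1 := by
        simpa [mem_sphere_zero_iff_norm] using hunorm
      have hveq : v = ‖v‖ • u := by
        rw [hu, smul_smul, mul_inv_cancel₀ hn, one_smul]
      have hqv : mmQuad M v = ‖v‖ ^ 2 * mmQuad M u := by
        conv_lhs => rw [hveq]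
        simp only [mmQuad, mm_equiv_smul, Matrix.mulVec_smul, smul_dotProduct,
          dotProduct_smul, smul_eq_mul]
        ring
      rw [hqv, mul_comm]
      exact mul_le_mul_of_nonneg_left (hmin humem) (sq_nonneg _)

lemma mm_dot_symm {p : ℕ} {M : Matrix (Fin p) (Fin p) ℝ} (hM : M.IsSymm) (u w : Fin p → ℝ) :
    u ⬝ᵥ M.mulVec w = w ⬝ᵥ M.mulVec u := by
  rw [Matrix.dotProduct_mulVec, ← Matrix.mulVec_transpose, hM.eq, dotProduct_comm]

lemma mm_cancel {p : ℕ} {H : Matrix (Fin p) (Fin p) ℝ} (hpd : H.PosDef) (d : Fin p → ℝ) :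
    H.mulVec (H⁻¹.mulVec d) = d := by
  rw [Matrix.mulVec_mulVec, Matrix.mul_nonsing_inv _ hpd.det_pos.ne'.isUnit, Matrix.one_mulVec]

/-- the quadratic form of `H` at the step `H⁻¹ g` equals the quadratic form of `H⁻¹` at `g`. -/
lemma mmQuad_step {p : ℕ} {H : Matrix (Fin p) (Fin p) ℝ} (hpd : H.PosDef)
    (g : EuclideanSpace ℝ (Fin p)) :
    mmQuad H ((WithLp.equiv 2 (Fin p → ℝ)).symm
      (H⁻¹.mulVec ((WithLp.equiv 2 (Fin p → ℝ)) g))) = mmQuad H⁻¹ g := by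
  unfold mmQuad
  rw [Equiv.apply_symm_apply, mm_cancel hpd, dotProduct_comm]

/-- expansion of the quadratic form of a symmetric matrix at a difference. -/
lemma mmQuad_sub {p : ℕ} {H : Matrix (Fin p) (Fin p) ℝ} (hsymm : H.IsSymm)
    (u w : EuclideanSpace ℝ (Fin p)) :
    mmQuad H (u - w) = mmQuad H u
      - 2 * ((WithLp.equiv 2 (Fin p → ℝ)) u ⬝ᵥ H.mulVec ((WithLp.equiv 2 (Fin p → ℝ)) w))
      + mmQuad H w := by
  unfold mmQuad
  rw [mm_equiv_sub, Matrix.mulVec_sub, sub_dotProduct, dotProduct_sub,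
    dotProduct_sub, mm_dot_symm hsymm ((WithLp.equiv 2 (Fin p → ℝ)) w)]
  ring

lemma mm_inner_step {p : ℕ} (H : Matrix (Fin p) (Fin p) ℝ) (a b : EuclideanSpace ℝ (Fin p)) :
    (inner ℝ a ((WithLp.equiv 2 (Fin p → ℝ)).symm
        (H.mulVec ((WithLp.equiv 2 (Fin p → ℝ)) b))) : ℝ)
      = (WithLp.equiv 2 (Fin p → ℝ)) a ⬝ᵥ H.mulVec ((WithLp.equiv 2 (Fin p → ℝ)) b) := by
  rw [mmInner_eq_dot, Equiv.apply_symm_apply]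

lemma grad_lb {p : ℕ} {f : EuclideanSpace ℝ (Fin p) → ℝ}
    (hconv : ConvexOn ℝ Set.univ f) (hdiff : Differentiable ℝ f)
    (x y : EuclideanSpace ℝ (Fin p)) :
    f x + (inner ℝ (gradient f x) (y - x) : ℝ) ≤ f y := by
  set L := AffineMap.lineMap (k := ℝ) x y with hL
  have hgc : ConvexOn ℝ Set.univ (f ∘ L) := by
    simpa using hconv.comp_affineMap L
  have hfd : HasFDerivAt f ((InnerProductSpace.toDualMap ℝ _) (gradient f x) :
      EuclideanSpace ℝ (Fin p) →L[ℝ] ℝ) x :=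
    hasGradientAt_iff_hasFDerivAt.mp (hdiff x).hasGradientAt
  have hL0 : L 0 = x := AffineMap.lineMap_apply_zero x y
  have hL1 : L 1 = y := AffineMap.lineMap_apply_one x y
  have hld : HasDerivAt (⇑L) (y - x) 0 := AffineMap.hasDerivAt_lineMap
  have hfd' : HasFDerivAt f ((InnerProductSpace.toDualMap ℝ _) (gradient f x) :
      EuclideanSpace ℝ (Fin p) →L[ℝ] ℝ) (L 0) := by rw [hL0]; exact hfd
  have hgd : HasDerivAt (f ∘ L) ((inner ℝ (gradient f x) (y - x) : ℝ)) 0 :=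
    hfd'.comp_hasDerivAt 0 hld
  have hs := hgc.le_slope_of_hasDerivAt (Set.mem_univ (0:ℝ)) (Set.mem_univ (1:ℝ)) one_pos hgd
  rw [slope_def_field] at hs
  simp only [Function.comp_apply, hL0, hL1] at hs
  have : (f y - f x) / (1 - 0) = f y - f x := by norm_num
  linarith [hs.trans_eq this]

/-- Convergence of fixed-curvature MM iterates for a convex differentiable
function: if `H` is symmetric positive definite, the quadratic surrogate with
curvature `H` majorizes `f`, and the set of stationary points is nonempty,
then the iterates `β_{m+1} = β_m - H⁻¹ ∇f(β_m)` converge to a stationary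
point, which is a global minimum of `f`. -/
theorem mm_fixed_curvature_convergence
    (p : ℕ) (f : EuclideanSpace ℝ (Fin p) → ℝ)
    (hconv : ConvexOn ℝ Set.univ f)
    (hdiff : Differentiable ℝ f)
    (H : Matrix (Fin p) (Fin p) ℝ)
    (hsymm : H.IsSymm) (hpd : H.PosDef)
    (hmaj : ∀ α β : EuclideanSpace ℝ (Fin p),
      f α ≤ f β + (inner ℝ (gradient f β) (α - β) : ℝ) +
        (1 / 2) * ((WithLp.equiv 2 (Fin p → ℝ)) (α - β) ⬝ᵥ
          H.mulVec ((WithLp.equiv 2 (Fin p → ℝ)) (α - β))))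
    (hstat : ∃ β : EuclideanSpace ℝ (Fin p), gradient f β = 0)
    (β : ℕ → EuclideanSpace ℝ (Fin p))
    (hiter : ∀ m, β (m + 1) = β m -
      (WithLp.equiv 2 (Fin p → ℝ)).symm
        (H⁻¹.mulVec ((WithLp.equiv 2 (Fin p → ℝ)) (gradient f (β m))))) :
    ∃ βstar : EuclideanSpace ℝ (Fin p),
      Filter.Tendsto β Filter.atTop (nhds βstar) ∧
      gradient f βstar = 0 ∧
      ∀ x, f βstar ≤ f x := by
  classical
  obtain ⟨bh, hbh⟩ := hstat
  have hmaj' : ∀ α b : EuclideanSpace ℝ (Fin p),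
      f α ≤ f b + (inner ℝ (gradient f b) (α - b) : ℝ) + (1/2) * mmQuad H (α - b) := hmaj
  obtain ⟨c₁, hc₁pos, hc₁⟩ := mmQuad_lb hpd
  obtain ⟨c₂, hc₂pos, hc₂⟩ := mmQuad_lb hpd.inv
  set step : ℕ → EuclideanSpace ℝ (Fin p) := fun m => (WithLp.equiv 2 (Fin p → ℝ)).symm
      (H⁻¹.mulVec ((WithLp.equiv 2 (Fin p → ℝ)) (gradient f (β m)))) with hstep
  -- core co-coercivity-type inequality
  have hD : ∀ x y : EuclideanSpace ℝ (Fin p),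
      (1/2) * mmQuad H⁻¹ (gradient f x - gradient f y) ≤
        f x - f y - (inner ℝ (gradient f y) (x - y) : ℝ) := by
    intro x y
    set d : EuclideanSpace ℝ (Fin p) := gradient f x - gradient f y with hd
    set w : EuclideanSpace ℝ (Fin p) := (WithLp.equiv 2 (Fin p → ℝ)).symm
      (H⁻¹.mulVec ((WithLp.equiv 2 (Fin p → ℝ)) d)) with hw
    have h1 := hmaj' (x - w) x
    have h2 := grad_lb hconv hdiff y (x - w)
    have hax : x - w - x = -w := by abel
    rw [hax] at h1
    have hq : mmQuad H (-w) = mmQuad H⁻¹ d := by rw [mmQuad_neg]; exact mmQuad_step hpd d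
    rw [hq] at h1
    have hix : (inner ℝ (gradient f x) (-w) : ℝ)
        = -((WithLp.equiv 2 (Fin p → ℝ)) (gradient f x) ⬝ᵥ
            H⁻¹.mulVec ((WithLp.equiv 2 (Fin p → ℝ)) d)) := by
      rw [inner_neg_right, hw, mm_inner_step]
    rw [hix] at h1
    have hay : x - w - y = (x - y) - w := by abel
    rw [hay] at h2
    have hiy : (inner ℝ (gradient f y) ((x - y) - w) : ℝ)
        = (inner ℝ (gradient f y) (x - y) : ℝ)
          - (WithLp.equiv 2 (Fin p → ℝ)) (gradient f y) ⬝ᵥ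
              H⁻¹.mulVec ((WithLp.equiv 2 (Fin p → ℝ)) d) := by
      rw [inner_sub_right, hw, mm_inner_step]
    rw [hiy] at h2
    have hsum : (WithLp.equiv 2 (Fin p → ℝ)) (gradient f x) ⬝ᵥ
          H⁻¹.mulVec ((WithLp.equiv 2 (Fin p → ℝ)) d)
        - (WithLp.equiv 2 (Fin p → ℝ)) (gradient f y) ⬝ᵥ
            H⁻¹.mulVec ((WithLp.equiv 2 (Fin p → ℝ)) d) = mmQuad H⁻¹ d := by
      rw [← sub_dotProduct, ← mm_equiv_sub, ← hd]
      rfl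
    linarith
  -- stationary points are global minima
  have hglob : ∀ z : EuclideanSpace ℝ (Fin p), gradient f z = 0 → ∀ x, f z ≤ f x := by
    intro z hz x
    have := grad_lb hconv hdiff z x
    rw [hz] at this
    simpa using this
  -- descent inequality
  have hdesc : ∀ m, f (β (m+1)) + (1/2) * mmQuad H⁻¹ (gradient f (β m)) ≤ f (β m) := by
    intro m
    have h1 := hmaj' (β (m+1)) (β m)
    have hs : β (m+1) - β m = -(step m) := by rw [hiter m]; abel
    rw [hs, mmQuad_neg, hstep, mmQuad_step hpd, inner_neg_right, mm_inner_step] at h1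
    have : (WithLp.equiv 2 (Fin p → ℝ)) (gradient f (β m)) ⬝ᵥ
        H⁻¹.mulVec ((WithLp.equiv 2 (Fin p → ℝ)) (gradient f (β m)))
        = mmQuad H⁻¹ (gradient f (β m)) := rfl
    rw [this] at h1
    linarith
  -- f (β m) is antitone and bounded below
  have hBnn : ∀ m, 0 ≤ mmQuad H⁻¹ (gradient f (β m)) := fun m => mmQuad_nonneg hpd.inv _
  have hanti : Antitone fun m => f (β m) :=
    antitone_nat_of_succ_le fun m => by have := hdesc m; have := hBnn m; linarith
  have hbdd : BddBelow (Set.range fun m => f (β m)) := by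
    refine ⟨f bh, ?_⟩
    rintro _ ⟨m, rfl⟩
    exact hglob bh hbh (β m)
  have hftend : Tendsto (fun m => f (β m)) atTop (nhds (⨅ m, f (β m))) :=
    tendsto_atTop_ciInf hanti hbdd
  -- quadratic form of gradients tends to zero
  have hBto0 : Tendsto (fun m => mmQuad H⁻¹ (gradient f (β m))) atTop (nhds 0) := by
    have hdiffto : Tendsto (fun m => 2 * (f (β m) - f (β (m+1)))) atTop (nhds 0) := by
      have h1 : Tendsto (fun m => f (β (m+1))) atTop (nhds (⨅ m, f (β m))) :=
        hftend.comp (tendsto_add_atTop_nat 1)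
      have := (hftend.sub h1).const_mul (2:ℝ)
      simpa using this
    refine squeeze_zero (fun m => hBnn m) (fun m => ?_) hdiffto
    have := hdesc m
    linarith
  -- gradients tend to zero
  have hgto0 : Tendsto (fun m => gradient f (β m)) atTop (nhds 0) := by
    have hsq : Tendsto (fun m => ‖gradient f (β m)‖ ^ 2) atTop (nhds 0) := by
      have hlim : Tendsto (fun m => c₂⁻¹ * mmQuad H⁻¹ (gradient f (β m))) atTop (nhds 0) := by
        simpa using hBto0.const_mul c₂⁻¹
      refine squeeze_zero (fun m => sq_nonneg _) (fun m => ?_) hlim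
      have h2 := hc₂ (gradient f (β m))
      rw [le_inv_mul_iff₀ hc₂pos]
      exact h2
    have hn : Tendsto (fun m => ‖gradient f (β m)‖) atTop (nhds 0) := by
      have := (Real.continuous_sqrt.tendsto 0).comp hsq
      simpa [Function.comp_def, Real.sqrt_sq, norm_nonneg] using this
    exact tendsto_zero_iff_norm_tendsto_zero.mpr hn
  -- Fejér monotonicity with respect to any stationary point
  have hfej : ∀ z : EuclideanSpace ℝ (Fin p), gradient f z = 0 →
      ∀ m, mmQuad H (β (m+1) - z) ≤ mmQuad H (β m - z) := by
    intro z hz m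
    have hsplit : β (m+1) - z = (β m - z) - step m := by rw [hiter m]; abel
    rw [hsplit, mmQuad_sub hsymm]
    have hes : (WithLp.equiv 2 (Fin p → ℝ)) (step m)
        = H⁻¹.mulVec ((WithLp.equiv 2 (Fin p → ℝ)) (gradient f (β m))) := by
      rw [hstep]; exact Equiv.apply_symm_apply _ _
    have hcross : (WithLp.equiv 2 (Fin p → ℝ)) (β m - z) ⬝ᵥ
        H.mulVec ((WithLp.equiv 2 (Fin p → ℝ)) (step m))
        = (inner ℝ (gradient f (β m)) (β m - z) : ℝ) := by
      rw [hes, mm_cancel hpd, mmInner_eq_dot, dotProduct_comm]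
    have hqs : mmQuad H (step m) = mmQuad H⁻¹ (gradient f (β m)) := by
      rw [hstep]; exact mmQuad_step hpd _
    rw [hcross, hqs]
    -- need : mmQuad H⁻¹ (g m) ≤ 2 * inner (g m) (β m - z)
    have hkey := hD z (β m)
    rw [hz] at hkey
    have hneg : (0:EuclideanSpace ℝ (Fin p)) - gradient f (β m) = -(gradient f (β m)) := by abel
    rw [hneg, mmQuad_neg] at hkey
    have hin : (inner ℝ (gradient f (β m)) (z - β m) : ℝ)
        = -(inner ℝ (gradient f (β m)) (β m - z) : ℝ) := by
      rw [← inner_neg_right]; congr 1; abel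
    rw [hin] at hkey
    have hfz : f z ≤ f (β m) := hglob z hz (β m)
    linarith
  -- the iterates are bounded: they stay in a closed ball around bh
  set R := mmQuad H (β 0 - bh) with hR
  have hAanti : Antitone fun m => mmQuad H (β m - bh) :=
    antitone_nat_of_succ_le (hfej bh hbh)
  have hAb : ∀ m, mmQuad H (β m - bh) ≤ R := fun m => hAanti (Nat.zero_le m)
  set r := Real.sqrt (R / c₁) with hr
  have hmem : ∀ m, β m ∈ Metric.closedBall bh r := by
    intro m
    rw [Metric.mem_closedBall, dist_eq_norm]
    have h1 : c₁ * ‖β m - bh‖ ^ 2 ≤ R := le_trans (hc₁ _) (hAb m)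
    have h2 : ‖β m - bh‖ ^ 2 ≤ R / c₁ := (le_div_iff₀' hc₁pos).mpr h1
    calc ‖β m - bh‖ = Real.sqrt (‖β m - bh‖ ^ 2) := (Real.sqrt_sq (norm_nonneg _)).symm
      _ ≤ r := Real.sqrt_le_sqrt h2
  obtain ⟨βstar, _, φ, hφ, hms⟩ :=
    (isCompact_closedBall bh r).tendsto_subseq hmem
  have hφtend : Tendsto φ atTop atTop := hφ.tendsto_atTop
  -- the limit point is stationary
  have hgstar : gradient f βstar = 0 := by
    have hrhs : Tendsto (fun k => 2 * (f (β (φ k)) - f βstar -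
        (inner ℝ (gradient f βstar) (β (φ k) - βstar) : ℝ))) atTop (nhds 0) := by
      have h1 : Tendsto (fun k => f (β (φ k))) atTop (nhds (f βstar)) :=
        (hdiff.continuous.tendsto βstar).comp hms
      have h2 : Tendsto (fun k => β (φ k) - βstar) atTop (nhds 0) := by
        simpa using hms.sub (tendsto_const_nhds (x := βstar))
      have h3 : Tendsto (fun k => (inner ℝ (gradient f βstar) (β (φ k) - βstar) : ℝ))
          atTop (nhds 0) := by
        simpa using (tendsto_const_nhds (x := gradient f βstar)).inner (𝕜 := ℝ) h2
      have := ((h1.sub (tendsto_const_nhds (x := f βstar))).sub h3).const_mul (2:ℝ)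
      simpa using this
    have hlhs : Tendsto (fun k => c₂ * ‖gradient f (β (φ k)) - gradient f βstar‖ ^ 2)
        atTop (nhds (c₂ * ‖gradient f βstar‖ ^ 2)) := by
      have h1 : Tendsto (fun k => gradient f (β (φ k)) - gradient f βstar) atTop
          (nhds (-(gradient f βstar))) := by
        have := (hgto0.comp hφtend).sub (tendsto_const_nhds (x := gradient f βstar))
        simpa using this
      have h2 := ((h1.norm).pow 2).const_mul c₂
      simpa using h2
    have hle : ∀ k, c₂ * ‖gradient f (β (φ k)) - gradient f βstar‖ ^ 2
        ≤ 2 * (f (β (φ k)) - f βstar - (inner ℝ (gradient f βstar) (β (φ k) - βstar) : ℝ)) := by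
      intro k
      have h1 := hD (β (φ k)) βstar
      have h2 := hc₂ (gradient f (β (φ k)) - gradient f βstar)
      linarith
    have hfinal : c₂ * ‖gradient f βstar‖ ^ 2 ≤ 0 :=
      le_of_tendsto_of_tendsto' hlhs hrhs hle
    have : ‖gradient f βstar‖ ^ 2 ≤ 0 := by
      by_contra hcon
      push_neg at hcon
      nlinarith
    have hn0 : ‖gradient f βstar‖ = 0 := by nlinarith [sq_nonneg ‖gradient f βstar‖, norm_nonneg (gradient f βstar)]
    exact norm_eq_zero.mp hn0
  have hminstar : ∀ x, f βstar ≤ f x := hglob βstar hgstar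
  -- convergence of the whole sequence to βstar
  have hDanti : Antitone fun m => mmQuad H (β m - βstar) :=
    antitone_nat_of_succ_le (hfej βstar hgstar)
  have hDnn : ∀ m, 0 ≤ mmQuad H (β m - βstar) := fun m => mmQuad_nonneg hpd _
  have hDbdd : BddBelow (Set.range fun m => mmQuad H (β m - βstar)) := by
    refine ⟨0, ?_⟩; rintro _ ⟨m, rfl⟩; exact hDnn m
  have hDtend : Tendsto (fun m => mmQuad H (β m - βstar)) atTop
      (nhds (⨅ m, mmQuad H (β m - βstar))) := tendsto_atTop_ciInf hDanti hDbdd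
  have hDsub0 : Tendsto (fun k => mmQuad H (β (φ k) - βstar)) atTop (nhds 0) := by
    have h2 : Tendsto (fun k => β (φ k) - βstar) atTop (nhds 0) := by
      simpa using hms.sub (tendsto_const_nhds (x := βstar))
    have := ((mmQuad_cont H).tendsto 0).comp h2
    simpa [mmQuad_zero, Function.comp_def] using this
  have hDinf0 : (⨅ m, mmQuad H (β m - βstar)) = 0 :=
    tendsto_nhds_unique (hDtend.comp hφtend) hDsub0
  rw [hDinf0] at hDtend
  have hnormto0 : Tendsto (fun m => ‖β m - βstar‖ ^ 2) atTop (nhds 0) := by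
    have hlim : Tendsto (fun m => c₁⁻¹ * mmQuad H (β m - βstar)) atTop (nhds 0) := by
      simpa using hDtend.const_mul c₁⁻¹
    refine squeeze_zero (fun m => sq_nonneg _) (fun m => ?_) hlim
    rw [le_inv_mul_iff₀ hc₁pos]
    exact hc₁ _
  have hto : Tendsto β atTop (nhds βstar) := by
    rw [← tendsto_sub_nhds_zero_iff]
    refine tendsto_zero_iff_norm_tendsto_zero.mpr ?_
    have := (Real.continuous_sqrt.tendsto 0).comp hnormto0
    simpa [Function.comp_def, Real.sqrt_sq, norm_nonneg] using this
  exact ⟨βstar, hto, hgstar, hminstar⟩
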